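/- Let W, W̃ be n×k real matrices with orthonormal columns. Then ‖WW^T − W̃W̃^T‖_2 ≤ min{‖W̃U − W‖_F : U ∈ O(k)} ≤ √(2k) · ‖WW^T − W̃W̃^T‖_2, where ‖·‖_2 is the spectral norm and ‖·‖_F the Frobenius norm. -/

import Mathlib

open Matrix

noncomputable def rnorm {k : ℕ} (v : Fin k → ℝ) : ℝ := Real.sqrt (∑ j, v j ^ 2)

/-- two-to-infinity norm: maximum Euclidean norm of the rows -/
noncomputable def twoInf {n k : ℕ} (B : Matrix (Fin n) (Fin k) ℝ) : ℝ := ⨆ i, rnorm (B i)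

/-- Frobenius norm -/
noncomputable def frob {n k : ℕ} (B : Matrix (Fin n) (Fin k) ℝ) : ℝ :=
  Real.sqrt (∑ i, ∑ j, B i j ^ 2)

/-- maximum absolute row-sum norm -/
noncomputable def rowSumNorm {n k : ℕ} (B : Matrix (Fin n) (Fin k) ℝ) : ℝ := ⨆ i, ∑ j, |B i j|

/-- spectral norm: operator norm induced by Euclidean vector norms -/
noncomputable def specNorm {m n : ℕ} (B : Matrix (Fin m) (Fin n) ℝ) : ℝ :=
  ‖(Matrix.toEuclideanLin B).toContinuousLinearMap‖

/-- vector sup norm -/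
noncomputable def vecInf {n : ℕ} (v : Fin n → ℝ) : ℝ := ⨆ i, |v i|

/-- smallest singular value, via σ_min(B) = inf over unit v of ‖vᵀB‖₂ -/
noncomputable def sigmaMin {l : ℕ} (B : Matrix (Fin l) (Fin l) ℝ) : ℝ :=
  ⨅ v : {v : Fin l → ℝ // rnorm v = 1}, rnorm (Matrix.vecMul v.1 B)

lemma rnorm_nonneg {k : ℕ} (v : Fin k → ℝ) : 0 ≤ rnorm v := Real.sqrt_nonneg _

lemma rnorm_sq {k : ℕ} (v : Fin k → ℝ) : rnorm v ^ 2 = v ⬝ᵥ v := by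
  rw [rnorm, Real.sq_sqrt (by positivity)]
  simp [dotProduct, sq]

lemma rnorm_eq_zero {k : ℕ} {v : Fin k → ℝ} (h : rnorm v = 0) : v = 0 := by
  have h2 : v ⬝ᵥ v = 0 := by rw [← rnorm_sq, h]; ring
  funext j
  have : ∑ i, v i ^ 2 = 0 := by simpa [dotProduct, sq] using h2
  have := (Finset.sum_eq_zero_iff_of_nonneg (fun i _ => sq_nonneg (v i))).1 this j (by simp)
  simpa [sq] using this

/-- bridge: rnorm is the euclidean norm -/
lemma rnorm_eq_norm {k : ℕ} (v : EuclideanSpace ℝ (Fin k)) : ‖v‖ = rnorm (fun j => v j) := by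
  rw [EuclideanSpace.norm_eq, rnorm]
  congr 1; apply Finset.sum_congr rfl; intro j _; rw [Real.norm_eq_abs, sq_abs]

lemma spec_mulVec {m n : ℕ} (B : Matrix (Fin m) (Fin n) ℝ) (v : Fin n → ℝ) :
    rnorm (B *ᵥ v) ≤ specNorm B * rnorm v := by
  have := ContinuousLinearMap.le_opNorm
    (Matrix.toEuclideanLin B).toContinuousLinearMap ((WithLp.equiv 2 (Fin n → ℝ)).symm v)
  rw [LinearMap.coe_toContinuousLinearMap'] at this
  rw [Matrix.toEuclideanLin_apply] at this
  simpa [rnorm_eq_norm, specNorm] using this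

lemma specNorm_nonneg {m n : ℕ} (B : Matrix (Fin m) (Fin n) ℝ) : 0 ≤ specNorm B :=
  norm_nonneg _

lemma specNorm_le_of {m n : ℕ} (B : Matrix (Fin m) (Fin n) ℝ) {C : ℝ} (hC : 0 ≤ C)
    (h : ∀ v, rnorm (B *ᵥ v) ≤ C * rnorm v) : specNorm B ≤ C := by
  apply ContinuousLinearMap.opNorm_le_bound _ hC
  intro x
  rw [LinearMap.coe_toContinuousLinearMap', Matrix.toEuclideanLin_apply]
  have := h ((WithLp.equiv 2 (Fin n → ℝ)) x)
  simpa [rnorm_eq_norm] using this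


lemma frob_nonneg {n k : ℕ} (B : Matrix (Fin n) (Fin k) ℝ) : 0 ≤ frob B := Real.sqrt_nonneg _

lemma frob_sq {n k : ℕ} (B : Matrix (Fin n) (Fin k) ℝ) : frob B ^ 2 = ∑ i, ∑ j, B i j ^ 2 := by
  rw [frob, Real.sq_sqrt (by positivity)]

lemma frob_sq_trace {n k : ℕ} (B : Matrix (Fin n) (Fin k) ℝ) :
    frob B ^ 2 = (Bᵀ * B).trace := by
  rw [frob_sq, Matrix.trace]
  rw [Finset.sum_comm]
  apply Finset.sum_congr rfl; intro j _
  simp [Matrix.diag, Matrix.mul_apply, sq]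

lemma frob_sq_eq_sum_cols {n k : ℕ} (B : Matrix (Fin n) (Fin k) ℝ) :
    frob B ^ 2 = ∑ j, rnorm (fun i => B i j) ^ 2 := by
  rw [frob_sq, Finset.sum_comm]
  apply Finset.sum_congr rfl; intro j _
  rw [rnorm_sq]; simp [dotProduct, sq]

lemma mul_col {m n k : ℕ} (A : Matrix (Fin m) (Fin n) ℝ) (B : Matrix (Fin n) (Fin k) ℝ) (j : Fin k) :
    (fun i => (A * B) i j) = A *ᵥ (fun l => B l j) := by
  funext i; simp [Matrix.mul_apply, Matrix.mulVec, dotProduct]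

lemma frob_mul_le {m n k : ℕ} (A : Matrix (Fin m) (Fin n) ℝ) (B : Matrix (Fin n) (Fin k) ℝ) :
    frob (A * B) ≤ specNorm A * frob B := by
  have h1 : frob (A * B) ^ 2 ≤ (specNorm A * frob B) ^ 2 := by
    rw [frob_sq_eq_sum_cols, mul_pow]
    rw [frob_sq_eq_sum_cols, Finset.mul_sum]
    apply Finset.sum_le_sum
    intro j _
    rw [mul_col]
    have := spec_mulVec A (fun l => B l j)
    have h2 := rnorm_nonneg (A *ᵥ fun l => B l j)
    nlinarith [specNorm_nonneg A, rnorm_nonneg (fun l => B l j)]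
  have := frob_nonneg (A * B)
  nlinarith [mul_nonneg (specNorm_nonneg A) (frob_nonneg B)]


lemma isCompact_box (n k : ℕ) :
    IsCompact {U : Matrix (Fin n) (Fin k) ℝ | ∀ i j, U i j ∈ Set.Icc (-1:ℝ) 1} := by
  have : {U : Matrix (Fin n) (Fin k) ℝ | ∀ i j, U i j ∈ Set.Icc (-1:ℝ) 1} =
      Set.univ.pi (fun _ : Fin n => Set.univ.pi fun _ : Fin k => Set.Icc (-1:ℝ) 1) := by
    ext U
    constructor
    · intro h i _ j _; exact h i j
    · intro h i j; exact h i (Set.mem_univ i) j (Set.mem_univ j)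
  rw [this]
  exact isCompact_univ_pi fun i => isCompact_univ_pi fun j => isCompact_Icc

lemma isCompact_O (k : ℕ) : IsCompact {U : Matrix (Fin k) (Fin k) ℝ | Uᵀ * U = 1} := by
  apply (isCompact_box k k).of_isClosed_subset
  · have : {U : Matrix (Fin k) (Fin k) ℝ | Uᵀ * U = 1} =
        (fun U : Matrix (Fin k) (Fin k) ℝ => Uᵀ * U) ⁻¹' {1} := rfl
    rw [this]
    exact IsClosed.preimage ((continuous_id.matrix_transpose).matrix_mul continuous_id)
      isClosed_singleton
  · intro U hU i j
    have hcol : ∑ l, U l j ^ 2 = 1 := by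
      have := congrArg (fun A => A j j) hU
      simpa [Matrix.mul_apply, Matrix.one_apply, sq] using this
    have h1 : U i j ^ 2 ≤ 1 := by
      rw [← hcol]
      exact Finset.single_le_sum (f := fun l => U l j ^2) (fun l _ => sq_nonneg _) (by simp)
    constructor <;> nlinarith


lemma dot_symm {n : ℕ} {A : Matrix (Fin n) (Fin n) ℝ} (hsym : Aᵀ = A) (u w : Fin n → ℝ) :
    u ⬝ᵥ (A *ᵥ w) = (A *ᵥ u) ⬝ᵥ w := by
  rw [Matrix.dotProduct_mulVec]
  congr 1
  rw [← Matrix.mulVec_transpose, hsym]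

lemma isCompact_sphere' (n : ℕ) : IsCompact {v : Fin n → ℝ | v ⬝ᵥ v = 1} := by
  have hbox : IsCompact {v : Fin n → ℝ | ∀ i, v i ∈ Set.Icc (-1:ℝ) 1} := by
    have : {v : Fin n → ℝ | ∀ i, v i ∈ Set.Icc (-1:ℝ) 1} =
        Set.univ.pi (fun _ : Fin n => Set.Icc (-1:ℝ) 1) := by
      ext v
      constructor
      · intro h i _; exact h i
      · intro h i; exact h i (Set.mem_univ i)
    rw [this]
    exact isCompact_univ_pi fun i => isCompact_Icc
  apply hbox.of_isClosed_subset
  · have : {v : Fin n → ℝ | v ⬝ᵥ v = 1} = (fun v : Fin n → ℝ => v ⬝ᵥ v) ⁻¹' {1} := rfl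
    rw [this]
    apply IsClosed.preimage _ isClosed_singleton
    exact continuous_finset_sum _ fun i _ => (continuous_apply i).mul (continuous_apply i)
  · intro v hv i
    have hs : ∑ l, v l ^ 2 = 1 := by simpa [dotProduct, sq] using hv
    have h1 : v i ^ 2 ≤ 1 := by
      rw [← hs]
      exact Finset.single_le_sum (f := fun l => v l ^2) (fun l _ => sq_nonneg _) (by simp)
    constructor <;> nlinarith


set_option maxHeartbeats 1000000 in
lemma exists_top_eigen {n : ℕ} (hn : 0 < n) (Δ : Matrix (Fin n) (Fin n) ℝ) (hsym : Δᵀ = Δ) :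
    ∃ (x : Fin n → ℝ) (lam : ℝ), rnorm x = 1 ∧ Δ *ᵥ x = lam • x ∧ |lam| = specNorm Δ := by
  set A := Δ * Δ with hA
  have hAsym : Aᵀ = A := by rw [hA, Matrix.transpose_mul, hsym]
  set f : (Fin n → ℝ) → ℝ := fun v => v ⬝ᵥ (A *ᵥ v) with hf
  have hfval : ∀ v, f v = rnorm (Δ *ᵥ v) ^ 2 := by
    intro v
    rw [rnorm_sq, hf]
    simp only [hA, ← Matrix.mulVec_mulVec]
    rw [dot_symm hsym]
  have hsph : IsCompact {v : Fin n → ℝ | v ⬝ᵥ v = 1} := isCompact_sphere' n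
  have hne : {v : Fin n → ℝ | v ⬝ᵥ v = 1}.Nonempty := by
    refine ⟨Pi.single ⟨0, hn⟩ 1, ?_⟩
    simp [dotProduct, Pi.single_apply]
  have hcont : ContinuousOn f {v : Fin n → ℝ | v ⬝ᵥ v = 1} := by
    apply Continuous.continuousOn
    have : f = fun v => ∑ i, v i * ∑ j, A i j * v j := by
      funext v; simp [hf, dotProduct, Matrix.mulVec]
    rw [this]
    apply continuous_finset_sum _ fun i _ => (continuous_apply i).mul ?_
    apply continuous_finset_sum _ fun j _ => continuous_const.mul (continuous_apply j)
  obtain ⟨x₀, hx₀S, hmax⟩ := hsph.exists_isMaxOn hne hcont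
  set μ := f x₀ with hμ
  have hx₀ : x₀ ⬝ᵥ x₀ = 1 := hx₀S
  have hμ0 : 0 ≤ μ := by rw [hμ, hfval]; positivity
  have hkey : ∀ w, f w ≤ μ * (w ⬝ᵥ w) := by
    intro w
    rcases eq_or_ne w 0 with h0 | h0
    · simp [hf, h0]
    · have hrw : rnorm w ≠ 0 := fun h => h0 (rnorm_eq_zero h)
      have hrw0 : 0 < rnorm w := lt_of_le_of_ne (rnorm_nonneg w) (Ne.symm hrw)
      set c := (rnorm w)⁻¹ with hc
      have hcw : (c • w) ⬝ᵥ (c • w) = 1 := by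
        have h5 : (c • w) ⬝ᵥ (c • w) = c^2 * (w ⬝ᵥ w) := by
          simp [smul_dotProduct, dotProduct_smul, sq]; ring
        rw [h5, ← rnorm_sq, hc]
        field_simp
      have hle : f (c • w) ≤ μ := hmax hcw
      have hfc : f (c • w) = c^2 * f w := by
        simp [hf, Matrix.mulVec_smul, smul_dotProduct, dotProduct_smul, sq]; ring
      have hww : w ⬝ᵥ w = rnorm w ^ 2 := (rnorm_sq w).symm
      rw [hfc] at hle
      have hc2 : c^2 = (rnorm w ^2)⁻¹ := by rw [hc]; field_simp
      rw [hc2] at hle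
      rw [hww]
      have h2 : (0:ℝ) < rnorm w ^ 2 := by positivity
      calc f w = (rnorm w ^2)⁻¹ * f w * rnorm w ^2 := by field_simp
        _ ≤ μ * rnorm w ^2 := by nlinarith
  have horth : ∀ y, x₀ ⬝ᵥ y = 0 → y ⬝ᵥ (A *ᵥ x₀) = 0 := by
    intro y hy
    by_contra hcne
    set cc := y ⬝ᵥ (A *ᵥ x₀) with hcc
    set d := μ * (y ⬝ᵥ y) - f y with hd
    have hexp : ∀ t : ℝ, 2 * t * cc ≤ t^2 * d := by
      intro t
      have h1 := hkey (x₀ + t • y)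
      have hdot : (x₀ + t • y) ⬝ᵥ (x₀ + t • y) = 1 + t^2 * (y ⬝ᵥ y) := by
        simp [add_dotProduct, dotProduct_add, smul_dotProduct, dotProduct_smul, hx₀,
          dotProduct_comm y x₀, hy]
        ring
      have hfexp : f (x₀ + t • y) = μ + 2*t*cc + t^2 * f y := by
        simp only [hf, Matrix.mulVec_add, Matrix.mulVec_smul, add_dotProduct, dotProduct_add,
          smul_dotProduct, dotProduct_smul]
        have hsw : x₀ ⬝ᵥ (A *ᵥ y) = y ⬝ᵥ (A *ᵥ x₀) := by
          rw [dot_symm hAsym, dotProduct_comm]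
        rw [hsw]
        simp only [smul_eq_mul]
        rw [hμ, hf, hcc]
        ring
      rw [hfexp, hdot] at h1
      rw [hd]
      nlinarith
    have hcc2 : 0 < cc^2 := by positivity
    rcases le_or_gt d 0 with hdn | hdp
    · have h := hexp cc
      nlinarith
    · have h := hexp (cc / d)
      have e1 : 2 * (cc/d) * cc = 2*cc^2/d := by ring
      have e2 : (cc/d)^2 * d = cc^2/d := by
        field_simp
      rw [e1, e2] at h
      rw [div_le_div_iff₀ hdp hdp] at h
      nlinarith
  have heig : A *ᵥ x₀ = μ • x₀ := by
    set a := A *ᵥ x₀ with ha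
    have hμa : μ = x₀ ⬝ᵥ a := by rw [hμ, hf]
    have h1 : x₀ ⬝ᵥ (a - μ • x₀) = 0 := by
      simp only [dotProduct_sub, dotProduct_smul, smul_eq_mul, hx₀]
      rw [hμa]; ring
    have h2 := horth (a - μ • x₀) h1
    have hcab : a ⬝ᵥ x₀ = x₀ ⬝ᵥ a := dotProduct_comm a x₀
    have h3 : (a - μ • x₀) ⬝ᵥ (a - μ • x₀) = 0 := by
      simp only [sub_dotProduct, smul_dotProduct, dotProduct_sub, dotProduct_smul,
        smul_eq_mul] at h2 ⊢
      rw [hcab] at *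
      rw [hμa] at *
      ring_nf
      ring_nf at h2
      nlinarith [h2, hx₀]
    have h5 : rnorm (a - μ • x₀) ^ 2 = 0 := by rw [rnorm_sq]; exact h3
    have h6 : rnorm (a - μ • x₀) = 0 := by
      nlinarith [rnorm_nonneg (a - μ • x₀)]
    exact sub_eq_zero.mp (rnorm_eq_zero h6)
  -- spectral norm equals sqrt μ
  have hspec : specNorm Δ = Real.sqrt μ := by
    apply le_antisymm
    · apply specNorm_le_of _ (Real.sqrt_nonneg μ)
      intro v
      have h1 : rnorm (Δ *ᵥ v) ^ 2 ≤ μ * rnorm v ^ 2 := by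
        rw [← hfval, rnorm_sq]; exact hkey v
      have h2 : Real.sqrt (rnorm (Δ *ᵥ v)^2) ≤ Real.sqrt (μ * rnorm v ^2) :=
        Real.sqrt_le_sqrt h1
      rw [Real.sqrt_sq (rnorm_nonneg _)] at h2
      rw [Real.sqrt_mul hμ0, Real.sqrt_sq (rnorm_nonneg _)] at h2
      exact h2
    · have h1 : rnorm (Δ *ᵥ x₀) ≤ specNorm Δ * rnorm x₀ := spec_mulVec Δ x₀
      have hx1 : rnorm x₀ = 1 := by
        have := rnorm_sq x₀
        rw [hx₀] at this
        nlinarith [rnorm_nonneg x₀]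
      rw [hx1, mul_one] at h1
      have h2 : rnorm (Δ *ᵥ x₀) = Real.sqrt μ := by
        rw [hμ, hfval x₀]
        rw [Real.sqrt_sq (rnorm_nonneg _)]
      linarith [h2 ▸ h1]
  -- construct eigenvector of Δ
  set s := Real.sqrt μ with hs
  have hs2 : s^2 = μ := Real.sq_sqrt hμ0
  set u := Δ *ᵥ x₀ + s • x₀ with hu
  have hΔu : Δ *ᵥ u = s • u := by
    rw [hu, Matrix.mulVec_add, Matrix.mulVec_smul]
    have : Δ *ᵥ (Δ *ᵥ x₀) = μ • x₀ := by
      rw [Matrix.mulVec_mulVec, ← hA, heig]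
    rw [this, smul_add]
    rw [← hs2]
    funext i
    simp [smul_eq_mul, sq]
    ring
  rcases eq_or_ne u 0 with hu0 | hu0
  · refine ⟨x₀, -s, ?_, ?_, ?_⟩
    · have := rnorm_sq x₀
      rw [hx₀] at this
      nlinarith [rnorm_nonneg x₀]
    · have : Δ *ᵥ x₀ = -(s • x₀) := by
        rw [hu] at hu0
        funext i
        have := congrFun hu0 i
        simp at this ⊢
        linarith
      rw [this]; funext i; simp
    · rw [hspec, abs_neg, abs_of_nonneg (show (0:ℝ) ≤ s by rw [hs]; exact Real.sqrt_nonneg μ)]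
  · have hru : rnorm u ≠ 0 := fun h => hu0 (rnorm_eq_zero h)
    have hru0 : 0 < rnorm u := lt_of_le_of_ne (rnorm_nonneg u) (Ne.symm hru)
    refine ⟨(rnorm u)⁻¹ • u, s, ?_, ?_, ?_⟩
    · have h5 : rnorm ((rnorm u)⁻¹ • u) ^2 = ((rnorm u)⁻¹)^2 * (u ⬝ᵥ u) := by
        rw [rnorm_sq]
        simp [smul_dotProduct, dotProduct_smul, sq]
        ring
      have h6 : u ⬝ᵥ u = rnorm u ^ 2 := (rnorm_sq u).symm
      rw [h6] at h5
      have h7 : rnorm ((rnorm u)⁻¹ • u)^2 = 1 := by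
        rw [h5]; field_simp
      nlinarith [rnorm_nonneg ((rnorm u)⁻¹ • u)]
    · rw [Matrix.mulVec_smul, hΔu, smul_comm]
    · rw [hspec, abs_of_nonneg (show (0:ℝ) ≤ s by rw [hs]; exact Real.sqrt_nonneg μ)]


lemma dot_CS (k : ℕ) (v w : Fin k → ℝ) : v ⬝ᵥ w ≤ rnorm v * rnorm w := by
  have h := Finset.sum_mul_sq_le_sq_mul_sq Finset.univ v w
  have h1 : (v ⬝ᵥ w)^2 ≤ (rnorm v * rnorm w)^2 := by
    rw [mul_pow, rnorm_sq, rnorm_sq]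
    simpa [dotProduct, sq] using h
  have h2 := mul_nonneg (rnorm_nonneg v) (rnorm_nonneg w)
  nlinarith [le_abs_self (v ⬝ᵥ w), sq_abs (v ⬝ᵥ w)]

lemma rnorm_mulVec_sq {m n : ℕ} (B : Matrix (Fin m) (Fin n) ℝ) (v : Fin n → ℝ) :
    rnorm (B *ᵥ v) ^ 2 = v ⬝ᵥ ((Bᵀ * B) *ᵥ v) := by
  rw [rnorm_sq, ← Matrix.mulVec_mulVec]
  rw [Matrix.dotProduct_mulVec v Bᵀ, ← Matrix.mulVec_transpose, Matrix.transpose_transpose]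

lemma spec_transpose_le {m n : ℕ} (B : Matrix (Fin m) (Fin n) ℝ) :
    specNorm Bᵀ ≤ specNorm B := by
  apply specNorm_le_of _ (specNorm_nonneg B)
  intro v
  rcases eq_or_ne (rnorm (Bᵀ *ᵥ v)) 0 with h0 | h0
  · rw [h0]; exact mul_nonneg (specNorm_nonneg B) (rnorm_nonneg v)
  · have h1 : rnorm (Bᵀ *ᵥ v)^2 = v ⬝ᵥ (B *ᵥ (Bᵀ *ᵥ v)) := by
      rw [rnorm_mulVec_sq, Matrix.transpose_transpose, ← Matrix.mulVec_mulVec]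
    have h2 := dot_CS _ v (B *ᵥ (Bᵀ *ᵥ v))
    have h3 := spec_mulVec B (Bᵀ *ᵥ v)
    have h4 := rnorm_nonneg (Bᵀ *ᵥ v)
    have h5 := rnorm_nonneg v
    have h6 := specNorm_nonneg B
    have hp : 0 < rnorm (Bᵀ *ᵥ v) := lt_of_le_of_ne h4 (Ne.symm h0)
    nlinarith
lemma spec_mul_le {m n p : ℕ} (A : Matrix (Fin m) (Fin n) ℝ) (B : Matrix (Fin n) (Fin p) ℝ) :
    specNorm (A * B) ≤ specNorm A * specNorm B := by
  apply specNorm_le_of _ (mul_nonneg (specNorm_nonneg A) (specNorm_nonneg B))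
  intro v
  rw [← Matrix.mulVec_mulVec]
  calc rnorm (A *ᵥ (B *ᵥ v)) ≤ specNorm A * rnorm (B *ᵥ v) := spec_mulVec _ _
    _ ≤ specNorm A * (specNorm B * rnorm v) :=
      mul_le_mul_of_nonneg_left (spec_mulVec _ _) (specNorm_nonneg A)
    _ = specNorm A * specNorm B * rnorm v := by ring

lemma spec_orth_le_one {n k : ℕ} {B : Matrix (Fin n) (Fin k) ℝ} (hB : Bᵀ * B = 1) :
    specNorm B ≤ 1 := by
  apply specNorm_le_of _ zero_le_one
  intro v
  have h : rnorm (B *ᵥ v)^2 = rnorm v ^2 := by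
    rw [rnorm_mulVec_sq, hB, Matrix.one_mulVec, rnorm_sq]
  nlinarith [rnorm_nonneg (B *ᵥ v), rnorm_nonneg v]

lemma spec_sq_le_spec_ata {m n : ℕ} (B : Matrix (Fin m) (Fin n) ℝ) :
    specNorm B ^ 2 ≤ specNorm (Bᵀ * B) := by
  have key : ∀ v, rnorm (B *ᵥ v) ≤ Real.sqrt (specNorm (Bᵀ * B)) * rnorm v := by
    intro v
    have h1 : rnorm (B *ᵥ v)^2 = v ⬝ᵥ ((Bᵀ*B) *ᵥ v) := rnorm_mulVec_sq B v
    have h2 : v ⬝ᵥ ((Bᵀ*B) *ᵥ v) ≤ rnorm v * (specNorm (Bᵀ*B) * rnorm v) := by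
      calc v ⬝ᵥ ((Bᵀ*B) *ᵥ v) ≤ rnorm v * rnorm ((Bᵀ*B) *ᵥ v) := dot_CS _ _ _
        _ ≤ rnorm v * (specNorm (Bᵀ*B) * rnorm v) :=
          mul_le_mul_of_nonneg_left (spec_mulVec _ _) (rnorm_nonneg v)
    have h3 : rnorm (B *ᵥ v)^2 ≤ specNorm (Bᵀ*B) * rnorm v ^2 := by nlinarith
    have h4 : Real.sqrt (rnorm (B *ᵥ v)^2) ≤ Real.sqrt (specNorm (Bᵀ*B) * rnorm v^2) :=
      Real.sqrt_le_sqrt h3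
    rw [Real.sqrt_sq (rnorm_nonneg _), Real.sqrt_mul (specNorm_nonneg _), Real.sqrt_sq (rnorm_nonneg _)] at h4
    exact h4
  have := specNorm_le_of B (Real.sqrt_nonneg _) key
  nlinarith [Real.sq_sqrt (specNorm_nonneg (Bᵀ*B)), specNorm_nonneg B, Real.sqrt_nonneg (specNorm (Bᵀ*B))]

lemma trace_psd_nonneg {n : ℕ} {A : Matrix (Fin n) (Fin n) ℝ} (h : A.PosSemidef) :
    0 ≤ A.trace := by
  rw [Matrix.trace]
  apply Finset.sum_nonneg
  intro i _
  have := h.dotProduct_mulVec_nonneg (Pi.single i 1)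
  simpa [Matrix.mulVec_single, dotProduct, Pi.single_apply, Matrix.diag] using this

lemma trace_mul_psd_nonneg {n : ℕ} {A B : Matrix (Fin n) (Fin n) ℝ}
    (hA : A.PosSemidef) (hB : B.PosSemidef) : 0 ≤ (A * B).trace := by
  open scoped MatrixOrder in
  set R := CFC.sqrt A with hR
  open scoped MatrixOrder in
  have hRR : R * R = A := CFC.sqrt_mul_sqrt_self A hA.nonneg
  open scoped MatrixOrder in
  have hRpsd : R.PosSemidef := (CFC.sqrt_nonneg A).posSemidef
  have hRh : Rᵀ = R := by
    have := hRpsd.1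
    exact this
  have h1 : (A * B).trace = (R * B * R).trace := by
    rw [← hRR, Matrix.mul_assoc, Matrix.trace_mul_comm]
  rw [h1]
  apply trace_psd_nonneg
  have := hB.mul_mul_conjTranspose_same R
  simpa [hRh] using this

lemma trace_mul_vecMulVec {n : ℕ} (A : Matrix (Fin n) (Fin n) ℝ) (x : Fin n → ℝ) :
    (A * Matrix.vecMulVec x x).trace = x ⬝ᵥ (A *ᵥ x) := by
  simp only [Matrix.trace, Matrix.diag, Matrix.mul_apply, Matrix.vecMulVec_apply, dotProduct,
    Matrix.mulVec]
  apply Finset.sum_congr rfl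
  intro i _
  rw [Finset.mul_sum]
  apply Finset.sum_congr rfl
  intro j _
  ring


lemma rnorm_smul_sq {n : ℕ} (c : ℝ) (v : Fin n → ℝ) :
    rnorm (c • v) ^ 2 = c^2 * (v ⬝ᵥ v) := by
  rw [rnorm_sq]
  simp [smul_dotProduct, dotProduct_smul, sq]
  ring

lemma normalize_unit {n : ℕ} {v : Fin n → ℝ} (h : v ≠ 0) :
    0 < rnorm v ∧ rnorm ((rnorm v)⁻¹ • v) = 1 := by
  have hrw : rnorm v ≠ 0 := fun hh => h (rnorm_eq_zero hh)
  have hp : 0 < rnorm v := lt_of_le_of_ne (rnorm_nonneg v) (Ne.symm hrw)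
  refine ⟨hp, ?_⟩
  have h1 : rnorm ((rnorm v)⁻¹ • v)^2 = ((rnorm v)⁻¹)^2 * (v ⬝ᵥ v) := rnorm_smul_sq _ _
  rw [← rnorm_sq] at h1
  have h2 : rnorm ((rnorm v)⁻¹ • v)^2 = 1 := by
    rw [h1]; field_simp
  nlinarith [rnorm_nonneg ((rnorm v)⁻¹ • v)]

/-- Bessel-type trace bound -/
lemma bessel_trace {n : ℕ} {A : Matrix (Fin n) (Fin n) ℝ} (hA : A.PosSemidef)
    {x z : Fin n → ℝ} (hx : x ⬝ᵥ x = 1) (hz : z ⬝ᵥ z = 1) (hxz : x ⬝ᵥ z = 0) :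
    x ⬝ᵥ (A *ᵥ x) + z ⬝ᵥ (A *ᵥ z) ≤ A.trace := by
  set Pr : Matrix (Fin n) (Fin n) ℝ := 1 - Matrix.vecMulVec x x - Matrix.vecMulVec z z with hPr
  have hvmv : ∀ (u : Fin n → ℝ) (v : Fin n → ℝ), (Matrix.vecMulVec u u) *ᵥ v = (u ⬝ᵥ v) • u := by
    intro u v
    funext i
    simp only [Matrix.mulVec, Matrix.vecMulVec_apply, dotProduct, Pi.smul_apply, smul_eq_mul]
    rw [Finset.sum_mul]
    apply Finset.sum_congr rfl; intro j _; ring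
  have hPrPSD : Pr.PosSemidef := by
    refine Matrix.PosSemidef.of_dotProduct_mulVec_nonneg ?_ ?_
    · show Prᴴ = Pr
      have : Prᵀ = Pr := by
        rw [hPr]
        simp only [Matrix.transpose_sub, Matrix.transpose_one]
        congr 1
        · congr 1
          ext i j
          simp [Matrix.transpose_apply, Matrix.vecMulVec_apply, mul_comm]
        · ext i j
          simp [Matrix.transpose_apply, Matrix.vecMulVec_apply, mul_comm]
      simpa using this
    · intro v
      have hform : star v ⬝ᵥ (Pr *ᵥ v) = v ⬝ᵥ v - (x ⬝ᵥ v)^2 - (z ⬝ᵥ v)^2 := by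
        have hsv : star v = v := rfl
        rw [hsv, hPr]
        simp only [Matrix.sub_mulVec, Matrix.one_mulVec, dotProduct_sub, hvmv,
          dotProduct_smul, smul_eq_mul]
        rw [dotProduct_comm v x, dotProduct_comm v z]
        ring
      rw [hform]
      have h0 : (0:ℝ) ≤ (v - (x ⬝ᵥ v) • x - (z ⬝ᵥ v) • z) ⬝ᵥ (v - (x ⬝ᵥ v) • x - (z ⬝ᵥ v) • z) := by
        rw [← rnorm_sq]; positivity
      simp only [sub_dotProduct, dotProduct_sub, smul_dotProduct, dotProduct_smul,
        smul_eq_mul] at h0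
      have c1 : v ⬝ᵥ x = x ⬝ᵥ v := dotProduct_comm v x
      have c2 : v ⬝ᵥ z = z ⬝ᵥ v := dotProduct_comm v z
      have c3 : z ⬝ᵥ x = x ⬝ᵥ z := dotProduct_comm z x
      rw [c1, c2, c3, hx, hz, hxz] at h0
      nlinarith [h0]
  have htr : (A * Pr).trace = A.trace - x ⬝ᵥ (A *ᵥ x) - z ⬝ᵥ (A *ᵥ z) := by
    rw [hPr]
    simp only [Matrix.mul_sub, Matrix.mul_one]
    rw [Matrix.trace_sub, Matrix.trace_sub, trace_mul_vecMulVec, trace_mul_vecMulVec]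
  have := trace_mul_psd_nonneg hA hPrPSD
  rw [htr] at this
  linarith

/-- partner eigenvector in the degenerate case -/
lemma partner_eigen {n k : ℕ} (W Wt : Matrix (Fin n) (Fin k) ℝ)
    (hW : Wᵀ * W = 1) (hWt : Wtᵀ * Wt = 1) (x : Fin n → ℝ) (hxx : x ⬝ᵥ x = 1)
    (hp : x ⬝ᵥ ((W * Wᵀ) *ᵥ x) = 1) (hq : x ⬝ᵥ ((Wt * Wtᵀ) *ᵥ x) = 0) :
    ∃ z, z ⬝ᵥ z = 1 ∧ (W * Wᵀ - Wt * Wtᵀ) *ᵥ z = (-1 : ℝ) • z := by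
  have hPx : (W * Wᵀ) *ᵥ x = x := by
    have hnn : rnorm (x - (W * Wᵀ) *ᵥ x) ^ 2 = 0 := by
      rw [rnorm_sq]
      have hPP : (W * Wᵀ) * (W * Wᵀ) = W * Wᵀ := by
        rw [Matrix.mul_assoc, ← Matrix.mul_assoc Wᵀ W Wᵀ, hW, Matrix.one_mul]
      have hPt : (W * Wᵀ)ᵀ = W * Wᵀ := by
        rw [Matrix.transpose_mul, Matrix.transpose_transpose]
      have h1 : ((W * Wᵀ) *ᵥ x) ⬝ᵥ ((W * Wᵀ) *ᵥ x) = 1 := by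
        rw [← rnorm_sq, rnorm_mulVec_sq, hPt, hPP, hp]
      have h2 : ((W * Wᵀ) *ᵥ x) ⬝ᵥ x = 1 := by
        rw [← dot_symm hPt, hp]
      simp only [sub_dotProduct, dotProduct_sub]
      rw [h1, h2, hp, hxx]
      ring
    have := rnorm_nonneg (x - (W * Wᵀ) *ᵥ x)
    have h3 : rnorm (x - (W * Wᵀ) *ᵥ x) = 0 := by nlinarith
    have h4 := rnorm_eq_zero h3
    funext i
    have h5 := congrFun h4 i
    simp only [Pi.sub_apply, Pi.zero_apply] at h5
    linarith
  have hQx : Wtᵀ *ᵥ x = 0 := by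
    have h1 : rnorm (Wtᵀ *ᵥ x)^2 = 0 := by
      rw [rnorm_mulVec_sq, Matrix.transpose_transpose, hq]
    have := rnorm_nonneg (Wtᵀ *ᵥ x)
    have h3 : rnorm (Wtᵀ *ᵥ x) = 0 := by nlinarith
    exact rnorm_eq_zero h3
  have hc0 : Wᵀ *ᵥ x ≠ 0 := by
    intro hc
    have h1 : rnorm (Wᵀ *ᵥ x)^2 = 1 := by
      rw [rnorm_mulVec_sq, Matrix.transpose_transpose, hp]
    rw [hc] at h1
    have h2 : rnorm (0 : Fin k → ℝ) = 0 := by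
      rw [rnorm]; simp
    rw [h2] at h1
    norm_num at h1
  have hMc : (Wᵀ * Wt)ᵀ *ᵥ (Wᵀ *ᵥ x) = 0 := by
    rw [Matrix.transpose_mul, Matrix.transpose_transpose, ← Matrix.mulVec_mulVec]
    rw [Matrix.mulVec_mulVec x W Wᵀ, hPx, hQx]
  have hdet : (Wᵀ * Wt).det = 0 := by
    have h1 : ((Wᵀ * Wt)ᵀ).det = 0 :=
      Matrix.exists_mulVec_eq_zero_iff.mp ⟨Wᵀ *ᵥ x, hc0, hMc⟩
    rwa [Matrix.det_transpose] at h1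
  obtain ⟨d, hd0, hd⟩ := Matrix.exists_mulVec_eq_zero_iff.mpr hdet
  set z' := Wt *ᵥ d with hz'
  have hz'0 : z' ≠ 0 := by
    intro h0
    have h1 : rnorm z' ^ 2 = d ⬝ᵥ d := by
      rw [hz', rnorm_mulVec_sq, hWt, Matrix.one_mulVec]
    rw [h0] at h1
    have h2 : rnorm (0 : Fin n → ℝ) = 0 := by rw [rnorm]; simp
    rw [h2] at h1
    have h3 : rnorm d ^ 2 = 0 := by rw [rnorm_sq, ← h1]; ring
    obtain ⟨hdp, -⟩ := normalize_unit hd0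
    nlinarith
  have hzeig : (W * Wᵀ - Wt * Wtᵀ) *ᵥ z' = (-1 : ℝ) • z' := by
    have h1 : (W * Wᵀ) *ᵥ z' = 0 := by
      rw [hz', Matrix.mulVec_mulVec, Matrix.mul_assoc, ← Matrix.mulVec_mulVec, hd]
      simp [Matrix.mulVec_zero]
    have h2 : (Wt * Wtᵀ) *ᵥ z' = z' := by
      rw [hz', Matrix.mulVec_mulVec, Matrix.mul_assoc, ← Matrix.mulVec_mulVec d Wt (Wtᵀ * Wt),
        hWt, Matrix.one_mulVec]
    rw [Matrix.sub_mulVec, h1, h2]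
    funext i; simp
  obtain ⟨hzp, hzu⟩ := normalize_unit hz'0
  refine ⟨(rnorm z')⁻¹ • z', ?_, ?_⟩
  · rw [← rnorm_sq, hzu]; norm_num
  · rw [Matrix.mulVec_smul, hzeig, smul_comm]
/-- core inequality of part 1 -/
lemma core_one {n k : ℕ} (W Wt : Matrix (Fin n) (Fin k) ℝ)
    (hW : Wᵀ * W = 1) (hWt : Wtᵀ * Wt = 1) :
    2 * specNorm (W * Wᵀ - Wt * Wtᵀ) ^ 2 ≤ frob (W * Wᵀ - Wt * Wtᵀ) ^ 2 := by
  set P := W * Wᵀ with hP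
  set Q := Wt * Wtᵀ with hQ
  set Δ := P - Q with hΔ
  have hPt : Pᵀ = P := by rw [hP, Matrix.transpose_mul, Matrix.transpose_transpose]
  have hQt : Qᵀ = Q := by rw [hQ, Matrix.transpose_mul, Matrix.transpose_transpose]
  have hsym : Δᵀ = Δ := by rw [hΔ, Matrix.transpose_sub, hPt, hQt]
  have hPP : P * P = P := by
    rw [hP, Matrix.mul_assoc, ← Matrix.mul_assoc Wᵀ W Wᵀ, hW, Matrix.one_mul]
  have hQQ : Q * Q = Q := by
    rw [hQ, Matrix.mul_assoc, ← Matrix.mul_assoc Wtᵀ Wt Wtᵀ, hWt, Matrix.one_mul]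
  rcases Nat.eq_zero_or_pos n with hn0 | hn
  · subst hn0
    have hs : specNorm Δ ≤ 0 := by
      apply specNorm_le_of _ le_rfl
      intro v
      have h1 : rnorm (Δ *ᵥ v) = 0 := by
        rw [rnorm]; simp
      rw [h1]; simp
    have hs0 : specNorm Δ = 0 := le_antisymm hs (specNorm_nonneg Δ)
    rw [hs0]
    nlinarith [frob_nonneg Δ]
  obtain ⟨x, lam, hx1, hxeig, hlam⟩ := exists_top_eigen hn Δ hsym
  have hxx : x ⬝ᵥ x = 1 := by rw [← rnorm_sq, hx1]; norm_num
  rcases eq_or_ne lam 0 with hl0 | hl0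
  · rw [← hlam, hl0]
    simp
    nlinarith [frob_nonneg Δ]
  have hexz : ∃ z : Fin n → ℝ, z ⬝ᵥ z = 1 ∧ Δ *ᵥ z = (-lam) • z := by
    set S := P + Q - 1 with hS
    have hSt : Sᵀ = S := by
      rw [hS]
      simp only [Matrix.transpose_sub, Matrix.transpose_add, hPt, hQt, Matrix.transpose_one]
    have hDS : Δ * S = P*Q - Q*P := by
      rw [hΔ, hS]
      simp only [Matrix.mul_sub, Matrix.sub_mul, Matrix.mul_add, Matrix.add_mul,
        Matrix.mul_one, hPP, hQQ]
      abel
    have hSD : S * Δ = Q*P - P*Q := by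
      rw [hΔ, hS]
      simp only [Matrix.mul_sub, Matrix.sub_mul, Matrix.mul_add, Matrix.add_mul,
        Matrix.one_mul, hPP, hQQ]
      abel
    have hSS : S * S = 1 - Δ * Δ := by
      rw [hΔ, hS]
      simp only [Matrix.mul_sub, Matrix.sub_mul, Matrix.mul_add, Matrix.add_mul,
        Matrix.mul_one, Matrix.one_mul, hPP, hQQ]
      abel
    set y := S *ᵥ x with hy
    have hyy : y ⬝ᵥ y = 1 - lam^2 := by
      have h1 : y ⬝ᵥ y = x ⬝ᵥ ((S*S) *ᵥ x) := by
        rw [hy, ← rnorm_sq, rnorm_mulVec_sq, hSt]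
      rw [h1, hSS]
      rw [Matrix.sub_mulVec, Matrix.one_mulVec, dotProduct_sub]
      rw [← Matrix.mulVec_mulVec, hxeig, Matrix.mulVec_smul, hxeig]
      simp only [dotProduct_smul, smul_eq_mul, hxx]
      ring
    rcases eq_or_ne y 0 with hy0 | hy0
    · have hl1 : lam^2 = 1 := by
        have h2 : y ⬝ᵥ y = 0 := by rw [hy0]; simp
        rw [hyy] at h2; linarith
      have hpq : x ⬝ᵥ (P *ᵥ x) - x ⬝ᵥ (Q *ᵥ x) = lam := by
        have h3 : x ⬝ᵥ (Δ *ᵥ x) = lam := by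
          rw [hxeig, dotProduct_smul, smul_eq_mul, hxx, mul_one]
        rw [← h3, hΔ, Matrix.sub_mulVec, dotProduct_sub]
      have hpP : x ⬝ᵥ (P *ᵥ x) = rnorm (Wᵀ *ᵥ x)^2 := by
        rw [rnorm_mulVec_sq, Matrix.transpose_transpose, ← hP]
      have hpQ : x ⬝ᵥ (Q *ᵥ x) = rnorm (Wtᵀ *ᵥ x)^2 := by
        rw [rnorm_mulVec_sq, Matrix.transpose_transpose, ← hQ]
      have hWspec : specNorm Wᵀ ≤ 1 := le_trans (spec_transpose_le W) (spec_orth_le_one hW)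
      have hWtspec : specNorm Wtᵀ ≤ 1 := le_trans (spec_transpose_le Wt) (spec_orth_le_one hWt)
      have hple : x ⬝ᵥ (P *ᵥ x) ≤ 1 := by
        rw [hpP]
        have h4 := spec_mulVec Wᵀ x
        rw [hx1, mul_one] at h4
        nlinarith [rnorm_nonneg (Wᵀ *ᵥ x), specNorm_nonneg Wᵀ]
      have hqle : x ⬝ᵥ (Q *ᵥ x) ≤ 1 := by
        rw [hpQ]
        have h4 := spec_mulVec Wtᵀ x
        rw [hx1, mul_one] at h4
        nlinarith [rnorm_nonneg (Wtᵀ *ᵥ x), specNorm_nonneg Wtᵀ]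
      have hp0 : 0 ≤ x ⬝ᵥ (P *ᵥ x) := by rw [hpP]; positivity
      have hq0 : 0 ≤ x ⬝ᵥ (Q *ᵥ x) := by rw [hpQ]; positivity
      have hcases : lam = 1 ∨ lam = -1 := by
        have h5 : (lam - 1) * (lam + 1) = 0 := by nlinarith
        rcases mul_eq_zero.mp h5 with h | h
        · left; linarith
        · right; linarith
      rcases hcases with hl | hl
      · have hp1 : x ⬝ᵥ (P *ᵥ x) = 1 := by linarith [hpq, hqle, hq0, hple]
        have hq1 : x ⬝ᵥ (Q *ᵥ x) = 0 := by linarith [hpq]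
        obtain ⟨z, hz1, hz2⟩ := partner_eigen W Wt hW hWt x hxx hp1 hq1
        refine ⟨z, hz1, ?_⟩
        rw [hl]
        exact hz2
      · have hq1 : x ⬝ᵥ (Q *ᵥ x) = 1 := by linarith [hpq, hple, hp0]
        have hp1 : x ⬝ᵥ (P *ᵥ x) = 0 := by linarith [hpq]
        obtain ⟨z, hz1, hz2⟩ := partner_eigen Wt W hWt hW x hxx hq1 hp1
        refine ⟨z, hz1, ?_⟩
        have h6 : Δ *ᵥ z = -((Wt * Wtᵀ - W * Wᵀ) *ᵥ z) := by
          rw [hΔ, hP, hQ]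
          rw [Matrix.sub_mulVec, Matrix.sub_mulVec]
          funext i; simp
        rw [h6, hz2, hl]
        funext i; simp
    · obtain ⟨hry, hnz⟩ := normalize_unit hy0
      refine ⟨(rnorm y)⁻¹ • y, ?_, ?_⟩
      · rw [← rnorm_sq, hnz]; norm_num
      · have hyeig : Δ *ᵥ y = (-lam) • y := by
          have hneg : P*Q - Q*P = -(S * Δ) := by rw [hSD, neg_sub]
          rw [hy, Matrix.mulVec_mulVec, hDS, hneg, Matrix.neg_mulVec, ← Matrix.mulVec_mulVec,
            hxeig, Matrix.mulVec_smul]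
          funext i; simp [hy]
        rw [Matrix.mulVec_smul, hyeig, smul_comm]
  obtain ⟨z, hzz, hzeig⟩ := hexz
  have hxz : x ⬝ᵥ z = 0 := by
    have h1 : x ⬝ᵥ (Δ *ᵥ z) = (Δ *ᵥ x) ⬝ᵥ z := dot_symm hsym x z
    rw [hzeig, hxeig] at h1
    simp only [dotProduct_smul, smul_dotProduct, smul_eq_mul] at h1
    have h2 : lam * (x ⬝ᵥ z) = 0 := by linarith
    rcases mul_eq_zero.mp h2 with h | h
    · exact absurd h hl0
    · exact h
  have hPSD : (Δᵀ * Δ).PosSemidef := Matrix.posSemidef_conjTranspose_mul_self Δ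
  have hbes := bessel_trace hPSD hxx hzz hxz
  have hex : x ⬝ᵥ ((Δᵀ * Δ) *ᵥ x) = lam^2 := by
    rw [← rnorm_mulVec_sq, hxeig, rnorm_smul_sq, hxx]
    ring
  have hez : z ⬝ᵥ ((Δᵀ * Δ) *ᵥ z) = lam^2 := by
    rw [← rnorm_mulVec_sq, hzeig, rnorm_smul_sq, hzz]
    ring
  rw [hex, hez, ← frob_sq_trace] at hbes
  have : specNorm Δ ^ 2 = lam ^ 2 := by
    rw [← hlam, sq_abs]
  rw [this]
  linarith


lemma exists_maxU {k : ℕ} (M : Matrix (Fin k) (Fin k) ℝ) :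
    ∃ U₀ : Matrix (Fin k) (Fin k) ℝ, U₀ᵀ * U₀ = 1 ∧
      ∀ U : Matrix (Fin k) (Fin k) ℝ, Uᵀ * U = 1 → (M * U).trace ≤ (M * U₀).trace := by
  have hne : {U : Matrix (Fin k) (Fin k) ℝ | Uᵀ * U = 1}.Nonempty :=
    ⟨1, by simp⟩
  have hcont : ContinuousOn (fun U : Matrix (Fin k) (Fin k) ℝ => (M * U).trace)
      {U : Matrix (Fin k) (Fin k) ℝ | Uᵀ * U = 1} := by
    apply Continuous.continuousOn
    exact Continuous.matrix_trace (continuous_const.matrix_mul continuous_id)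
  obtain ⟨U₀, hU₀, hmax⟩ := (isCompact_O k).exists_isMaxOn hne hcont
  exact ⟨U₀, hU₀, fun U hU => hmax hU⟩

set_option maxHeartbeats 1000000 in
lemma maxU_psd {k : ℕ} (M U₀ : Matrix (Fin k) (Fin k) ℝ) (hU₀ : U₀ᵀ * U₀ = 1)
    (hmax : ∀ U : Matrix (Fin k) (Fin k) ℝ, Uᵀ * U = 1 → (M * U).trace ≤ (M * U₀).trace) :
    (M * U₀).PosSemidef := by
  set N := M * U₀ with hN
  have hNmax : ∀ V : Matrix (Fin k) (Fin k) ℝ, Vᵀ * V = 1 → (N * V).trace ≤ N.trace := by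
    intro V hV
    have h1 : (U₀ * V)ᵀ * (U₀ * V) = 1 := by
      rw [Matrix.transpose_mul, Matrix.mul_assoc, ← Matrix.mul_assoc U₀ᵀ U₀ V, hU₀,
        Matrix.one_mul, hV]
    have h2 := hmax (U₀ * V) h1
    rw [← Matrix.mul_assoc, ← hN] at h2
    simpa using h2
  -- Householder: quadratic form nonneg
  have hquad : ∀ v : Fin k → ℝ, 0 ≤ v ⬝ᵥ (N *ᵥ v) := by
    have hunit : ∀ v : Fin k → ℝ, v ⬝ᵥ v = 1 → 0 ≤ v ⬝ᵥ (N *ᵥ v) := by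
      intro v hv
      set A := Matrix.vecMulVec v v with hA
      have hAt : Aᵀ = A := by
        ext i j
        simp [hA, Matrix.transpose_apply, Matrix.vecMulVec_apply, mul_comm]
      have hAA : A * A = A := by
        ext i j
        simp only [hA, Matrix.mul_apply, Matrix.vecMulVec_apply]
        have : ∑ l, v i * v l * (v l * v j) = (v ⬝ᵥ v) * (v i * v j) := by
          rw [dotProduct, Finset.sum_mul]
          apply Finset.sum_congr rfl; intro l _; ring
        rw [this, hv, one_mul]
      set H : Matrix (Fin k) (Fin k) ℝ := 1 - (2:ℝ) • A with hH
      have hHorth : Hᵀ * H = 1 := by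
        have hHt : Hᵀ = H := by
          rw [hH, Matrix.transpose_sub, Matrix.transpose_smul, hAt, Matrix.transpose_one]
        rw [hHt, hH]
        simp only [Matrix.sub_mul, Matrix.mul_sub, Matrix.mul_one, Matrix.one_mul,
          Matrix.smul_mul, Matrix.mul_smul, hAA, smul_smul]
        module
      have h3 := hNmax H hHorth
      have h4 : (N * H).trace = N.trace - 2 * (v ⬝ᵥ (N *ᵥ v)) := by
        rw [hH]
        rw [Matrix.mul_sub, Matrix.mul_one, Matrix.trace_sub, Matrix.mul_smul,
          Matrix.trace_smul, hA, trace_mul_vecMulVec]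
        simp
      rw [h4] at h3
      linarith
    intro v
    rcases eq_or_ne v 0 with h0 | h0
    · simp [h0]
    · have hrv : rnorm v ≠ 0 := by
        intro h; exact h0 (by
          have h2 : v ⬝ᵥ v = 0 := by rw [← rnorm_sq, h]; ring
          funext i
          have : ∑ j, v j ^2 = 0 := by
            rw [← h2]; simp [dotProduct, sq]
          have := (Finset.sum_eq_zero_iff_of_nonneg (fun j _ => sq_nonneg (v j))).1 this i (by simp)
          simpa [sq] using this)
      have hrv0 : 0 < rnorm v := lt_of_le_of_ne (rnorm_nonneg v) (Ne.symm hrv)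
      have hu := hunit ((rnorm v)⁻¹ • v) (by
        have h1 : ((rnorm v)⁻¹ • v) ⬝ᵥ ((rnorm v)⁻¹ • v) = ((rnorm v)⁻¹)^2 * (v ⬝ᵥ v) := by
          simp [smul_dotProduct, dotProduct_smul, sq]; ring
        rw [h1, ← rnorm_sq]
        field_simp)
      have h2 : ((rnorm v)⁻¹ • v) ⬝ᵥ (N *ᵥ ((rnorm v)⁻¹ • v)) = ((rnorm v)⁻¹)^2 * (v ⬝ᵥ (N *ᵥ v)) := by
        rw [Matrix.mulVec_smul]
        simp [smul_dotProduct, dotProduct_smul, sq]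
        ring
      rw [h2] at hu
      nlinarith [pow_pos (inv_pos.mpr hrv0) 2]
  -- symmetry via Givens rotations
  have hsymm : Nᵀ = N := by
    ext i j
    rcases eq_or_ne i j with rfl | hij
    · rfl
    · -- use Givens rotation in coordinates (i,j)
      by_contra hne
      have hNji : Nᵀ i j = N j i := rfl
      set α := N i i + N j j with hα
      set β := N j i - N i j with hβ
      have hβ0 : β ≠ 0 := by
        rw [hβ]
        intro h
        apply hne
        rw [hNji]
        linarith [sub_eq_zero.mp h]
      have hα0 : 0 ≤ α := by
        have h1 := hquad (Pi.single i 1)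
        have h2 := hquad (Pi.single j 1)
        have e1 : (Pi.single i 1 : Fin k → ℝ) ⬝ᵥ (N *ᵥ Pi.single i 1) = N i i := by
          simp [Matrix.mulVec_single, dotProduct, Pi.single_apply]
        have e2 : (Pi.single j 1 : Fin k → ℝ) ⬝ᵥ (N *ᵥ Pi.single j 1) = N j j := by
          simp [Matrix.mulVec_single, dotProduct, Pi.single_apply]
        rw [e1] at h1; rw [e2] at h2
        rw [hα]; linarith
      -- Givens matrix
      set r := Real.sqrt (α^2 + β^2) with hr
      have hr0 : 0 < r := by
        rw [hr]
        apply Real.sqrt_pos.mpr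
        positivity
      have hr2 : r^2 = α^2 + β^2 := Real.sq_sqrt (by positivity)
      set c := α / r with hc
      set s := β / r with hs
      have hcs : c^2 + s^2 = 1 := by
        rw [hc, hs]
        field_simp
        linarith [hr2]
      set E : Fin k → Fin k → Matrix (Fin k) (Fin k) ℝ := fun a b => Matrix.single a b 1 with hE
      set A := E i i + E j j with hA
      set B := E i j - E j i with hB
      have hEmul : ∀ a b a' b', (E a b) * (E a' b') = if b = a' then E a b' else 0 := by
        intro a b a' b'
        rcases eq_or_ne b a' with rfl | h
        · rw [if_pos rfl, hE]
          simpa using Matrix.single_mul_single_same (1:ℝ) a b b' 1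
        · rw [if_neg h, hE]
          exact Matrix.single_mul_single_of_ne (1:ℝ) a b a' h 1
      have hAA : A * A = A := by
        rw [hA, Matrix.add_mul, Matrix.mul_add, Matrix.mul_add, hEmul, hEmul, hEmul, hEmul]
        simp [hij, Ne.symm hij]
      have hBB : B * B = -A := by
        rw [hB, hA, Matrix.sub_mul, Matrix.mul_sub, Matrix.mul_sub, hEmul, hEmul, hEmul, hEmul]
        simp [hij, Ne.symm hij]
        try abel
      have hAB : A * B = B := by
        rw [hA, hB, Matrix.add_mul, Matrix.mul_sub, Matrix.mul_sub, hEmul, hEmul, hEmul, hEmul]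
        simp [hij, Ne.symm hij]
        try abel
      have hBA : B * A = B := by
        rw [hB, hA, Matrix.sub_mul, Matrix.mul_add, Matrix.mul_add, hEmul, hEmul, hEmul, hEmul]
        simp [hij, Ne.symm hij]
        try abel
      have hEt : ∀ a b, (E a b)ᵀ = E b a := by
        intro a b
        ext p q
        simp only [hE, Matrix.transpose_apply, Matrix.single, Matrix.of_apply]
        by_cases h1 : a = q <;> by_cases h2 : b = p <;> simp [h1, h2] <;> tauto
      have hAt : Aᵀ = A := by
        rw [hA, Matrix.transpose_add, hEt, hEt]
      have hBt : Bᵀ = -B := by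
        rw [hB, Matrix.transpose_sub, hEt, hEt]
        abel
      set G : Matrix (Fin k) (Fin k) ℝ := 1 + (c-1) • A + s • B with hG
      have hGt : Gᵀ = 1 + (c-1) • A - s • B := by
        rw [hG, Matrix.transpose_add, Matrix.transpose_add, Matrix.transpose_smul,
          Matrix.transpose_smul, hAt, hBt, Matrix.transpose_one]
        rw [smul_neg]
        abel
      have hGorth : Gᵀ * G = 1 := by
        rw [hGt, hG]
        simp only [Matrix.add_mul, Matrix.sub_mul, Matrix.mul_add, Matrix.mul_sub,
          Matrix.mul_one, Matrix.one_mul, Matrix.smul_mul, Matrix.mul_smul, hAA, hBB, hAB, hBA,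
          smul_smul, smul_neg]
        match_scalars
        all_goals first
          | ring1
          | linear_combination hcs
          | linear_combination -hcs
          | linear_combination (c-1)*hcs
          | nlinarith [hcs]
      have htrG : (N * G).trace = N.trace + (c - 1) * α + s * β := by
        rw [hG]
        simp only [Matrix.mul_add, Matrix.mul_one, Matrix.trace_add, Matrix.mul_smul,
          Matrix.trace_smul]
        have htrE : ∀ a b, (N * E a b).trace = N b a := by
          intro a b
          rw [hE, Matrix.trace]
          rw [Finset.sum_eq_single b]
          · simp [Matrix.diag, Matrix.mul_single_apply_same]
          · intro l _ hl
            simp [Matrix.diag, Matrix.mul_single_apply_of_ne (1:ℝ) a b l l hl N]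
          · intro h
            exact absurd (Finset.mem_univ b) h
        have htrA : (N * A).trace = α := by
          rw [hA, Matrix.mul_add, Matrix.trace_add, htrE, htrE, hα]
        have htrB : (N * B).trace = β := by
          rw [hB, Matrix.mul_sub, Matrix.trace_sub, htrE, htrE, hβ]
        rw [htrA, htrB]
        simp [smul_eq_mul]
        try ring
      have h9 := hNmax G hGorth
      rw [htrG] at h9
      -- (c-1)α + sβ ≤ 0, but cα + sβ = r > α
      have hrne : r ≠ 0 := ne_of_gt hr0
      have h10 : c * α + s * β = r := by
        rw [hc, hs]
        field_simp
        nlinarith [hr2]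
      have hb2 : 0 < β^2 :=
        lt_of_le_of_ne (sq_nonneg β) (fun h => hβ0 (by nlinarith [sq_nonneg β]))
      have h11 : r > α := by
        have h12 : r^2 > α^2 := by rw [hr2]; nlinarith
        nlinarith [hr0, hα0]
      nlinarith
  exact Matrix.PosSemidef.of_dotProduct_mulVec_nonneg (by simpa using (show N.IsSymm from hsymm)) (fun v => by
    have := hquad v
    simpa using this)


lemma trace_NtN {k : ℕ} (M U₀ : Matrix (Fin k) (Fin k) ℝ) (hU₀ : U₀ᵀ * U₀ = 1) :
    ((M * U₀)ᵀ * (M * U₀)).trace = (Mᵀ * M).trace := by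
  have hU₀' : U₀ * U₀ᵀ = 1 := mul_eq_one_comm.mp hU₀
  rw [Matrix.transpose_mul]
  have h1 : U₀ᵀ * Mᵀ * (M * U₀) = U₀ᵀ * (Mᵀ * M) * U₀ := by
    rw [Matrix.mul_assoc, Matrix.mul_assoc, Matrix.mul_assoc]
  rw [h1, Matrix.trace_mul_cycle, ← Matrix.mul_assoc, hU₀', Matrix.one_mul]

lemma tau_ge_frobM {k : ℕ} (M U₀ : Matrix (Fin k) (Fin k) ℝ) (hU₀ : U₀ᵀ * U₀ = 1)
    (hM : specNorm M ≤ 1) (hpsd : (M * U₀).PosSemidef) :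
    (Mᵀ * M).trace ≤ (M * U₀).trace := by
  set N := M * U₀ with hN
  have hNspec : specNorm N ≤ 1 := by
    have h1 := spec_mul_le M U₀
    have h2 := spec_orth_le_one hU₀
    nlinarith [specNorm_nonneg M, specNorm_nonneg U₀]
  open scoped MatrixOrder in
  set R := CFC.sqrt N with hR
  open scoped MatrixOrder in
  have hRR : R * R = N := CFC.sqrt_mul_sqrt_self N hpsd.nonneg
  have hRt : Rᵀ = R := by
    open scoped MatrixOrder in
    have := (CFC.sqrt_nonneg N).posSemidef.1
    exact this
  have htrN : N.trace = frob R ^ 2 := by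
    rw [frob_sq_trace, hRt, hRR]
  have hNfrob : (Nᵀ * N).trace = frob N ^2 := (frob_sq_trace N).symm
  have hRspec : specNorm R ^ 2 ≤ 1 := by
    have h1 := spec_sq_le_spec_ata R
    rw [hRt, hRR] at h1
    linarith
  have h3 : frob N ≤ specNorm R * frob R := by
    rw [← hRR]; exact frob_mul_le R R
  have h4 : (Mᵀ * M).trace = (Nᵀ * N).trace := (trace_NtN M U₀ hU₀).symm
  rw [h4, hNfrob, htrN]
  nlinarith [frob_nonneg N, frob_nonneg R, specNorm_nonneg R]

lemma trace_one_k (k : ℕ) : (1 : Matrix (Fin k) (Fin k) ℝ).trace = (k : ℝ) := by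
  rw [Matrix.trace_one]
  simp

lemma frob_D_sq {n k : ℕ} (W Wt : Matrix (Fin n) (Fin k) ℝ) (U : Matrix (Fin k) (Fin k) ℝ)
    (hW : Wᵀ * W = 1) (hWt : Wtᵀ * Wt = 1) (hU : Uᵀ * U = 1) :
    frob (Wt * U - W) ^ 2 = 2 * k - 2 * ((Wᵀ * Wt) * U).trace := by
  rw [frob_sq_trace]
  rw [Matrix.transpose_sub, Matrix.transpose_mul, Matrix.sub_mul, Matrix.mul_sub,
    Matrix.mul_sub, Matrix.trace_sub, Matrix.trace_sub, Matrix.trace_sub]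
  have h1 : (Uᵀ * Wtᵀ * (Wt * U)).trace = (k : ℝ) := by
    have : Uᵀ * Wtᵀ * (Wt * U) = Uᵀ * (Wtᵀ * Wt) * U := by
      rw [Matrix.mul_assoc, Matrix.mul_assoc, Matrix.mul_assoc]
    rw [this, hWt, Matrix.mul_one, hU, trace_one_k]
  have h2 : (Wᵀ * W).trace = (k : ℝ) := by rw [hW, trace_one_k]
  have h3 : (Uᵀ * Wtᵀ * W).trace = ((Wᵀ * Wt) * U).trace := by
    have e1 : Uᵀ * Wtᵀ * W = ((Wᵀ * Wt) * U)ᵀ := by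
      rw [Matrix.transpose_mul, Matrix.transpose_mul, Matrix.transpose_transpose,
        Matrix.mul_assoc]
    rw [e1, Matrix.trace_transpose]
  have h4 : (Wᵀ * (Wt * U)).trace = ((Wᵀ * Wt) * U).trace := by
    rw [← Matrix.mul_assoc]
  rw [h1, h2, h3, h4]
  ring

lemma frob_delta_sq {n k : ℕ} (W Wt : Matrix (Fin n) (Fin k) ℝ)
    (hW : Wᵀ * W = 1) (hWt : Wtᵀ * Wt = 1) :
    frob (W * Wᵀ - Wt * Wtᵀ) ^ 2 = 2 * k - 2 * ((Wᵀ * Wt)ᵀ * (Wᵀ * Wt)).trace := by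
  rw [frob_sq_trace]
  have hsym : (W * Wᵀ - Wt * Wtᵀ)ᵀ = W * Wᵀ - Wt * Wtᵀ := by
    rw [Matrix.transpose_sub, Matrix.transpose_mul, Matrix.transpose_mul,
      Matrix.transpose_transpose, Matrix.transpose_transpose]
  rw [hsym]
  rw [Matrix.sub_mul, Matrix.mul_sub, Matrix.mul_sub, Matrix.trace_sub, Matrix.trace_sub,
    Matrix.trace_sub]
  have h1 : (W * Wᵀ * (W * Wᵀ)).trace = (k:ℝ) := by
    have e1 : W * Wᵀ * (W * Wᵀ) = W * Wᵀ := by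
      rw [Matrix.mul_assoc, ← Matrix.mul_assoc Wᵀ W Wᵀ, hW, Matrix.one_mul]
    rw [e1, Matrix.trace_mul_comm, hW, trace_one_k]
  have h2 : (Wt * Wtᵀ * (Wt * Wtᵀ)).trace = (k:ℝ) := by
    have e1 : Wt * Wtᵀ * (Wt * Wtᵀ) = Wt * Wtᵀ := by
      rw [Matrix.mul_assoc, ← Matrix.mul_assoc Wtᵀ Wt Wtᵀ, hWt, Matrix.one_mul]
    rw [e1, Matrix.trace_mul_comm, hWt, trace_one_k]
  have h3 : (W * Wᵀ * (Wt * Wtᵀ)).trace = ((Wᵀ * Wt)ᵀ * (Wᵀ * Wt)).trace := by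
    have e1 : W * Wᵀ * (Wt * Wtᵀ) = W * (Wᵀ * Wt) * Wtᵀ := by
      rw [Matrix.mul_assoc, Matrix.mul_assoc, Matrix.mul_assoc]
    rw [e1, Matrix.trace_mul_cycle]
    have e2 : Wtᵀ * W * (Wᵀ * Wt) = (Wᵀ * Wt)ᵀ * (Wᵀ * Wt) := by
      rw [Matrix.transpose_mul, Matrix.transpose_transpose]
    rw [← Matrix.mul_assoc] at e2 ⊢
    rw [e2]
  have h4 : (Wt * Wtᵀ * (W * Wᵀ)).trace = ((Wᵀ * Wt)ᵀ * (Wᵀ * Wt)).trace := by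
    rw [Matrix.trace_mul_comm, h3]
  rw [h1, h2, h3, h4]
  ring

lemma frob_delta_le {n k : ℕ} (W Wt : Matrix (Fin n) (Fin k) ℝ)
    (hW : Wᵀ * W = 1) (hWt : Wtᵀ * Wt = 1) :
    frob (W * Wᵀ - Wt * Wtᵀ) ^ 2 ≤ 2 * k * specNorm (W * Wᵀ - Wt * Wtᵀ) ^ 2 := by
  set P := W * Wᵀ with hP
  set Q := Wt * Wtᵀ with hQ
  set Δ := P - Q with hΔ
  have hPt : Pᵀ = P := by rw [hP, Matrix.transpose_mul, Matrix.transpose_transpose]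
  have hQt : Qᵀ = Q := by rw [hQ, Matrix.transpose_mul, Matrix.transpose_transpose]
  have hsym : Δᵀ = Δ := by rw [hΔ, Matrix.transpose_sub, hPt, hQt]
  have hPP : P * P = P := by
    rw [hP, Matrix.mul_assoc, ← Matrix.mul_assoc Wᵀ W Wᵀ, hW, Matrix.one_mul]
  have hQQ : Q * Q = Q := by
    rw [hQ, Matrix.mul_assoc, ← Matrix.mul_assoc Wtᵀ Wt Wtᵀ, hWt, Matrix.one_mul]
  set S := P + Q - 1 with hS
  have hDS : Δ * S = P*Q - Q*P := by
    rw [hΔ, hS]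
    simp only [Matrix.mul_sub, Matrix.sub_mul, Matrix.mul_add, Matrix.add_mul,
      Matrix.mul_one, hPP, hQQ]
    abel
  have hSD : S * Δ = Q*P - P*Q := by
    rw [hΔ, hS]
    simp only [Matrix.mul_sub, Matrix.sub_mul, Matrix.mul_add, Matrix.add_mul,
      Matrix.one_mul, hPP, hQQ]
    abel
  have hanti : Δ * S = -(S * Δ) := by rw [hDS, hSD, neg_sub]
  have hS0 : (Δ * Δ * S).trace = 0 := by
    have h1 : (Δ * Δ * S).trace = (Δ * (Δ * S)).trace := by rw [Matrix.mul_assoc]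
    have h2 : (Δ * (Δ * S)).trace = -(Δ * (S * Δ)).trace := by
      rw [hanti]
      rw [Matrix.mul_neg, Matrix.trace_neg]
    have h3 : (Δ * (S * Δ)).trace = (Δ * S * Δ).trace := by rw [Matrix.mul_assoc]
    have h4 : (Δ * S * Δ).trace = (Δ * (Δ * S)).trace := by
      rw [Matrix.trace_mul_cycle Δ S Δ, Matrix.mul_assoc]
    have := h2
    rw [h3, h4] at this
    rw [h1]
    linarith
  have hsplit : (Δ * Δ).trace = (Δ * Δ * P).trace + (Δ * Δ * Q).trace := by
    have h1 : Δ * Δ * S = Δ * Δ * P + Δ * Δ * Q - Δ * Δ := by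
      rw [hS, Matrix.mul_sub, Matrix.mul_add, Matrix.mul_one]
    have h2 := hS0
    rw [h1, Matrix.trace_sub, Matrix.trace_add] at h2
    linarith
  have hfrobW : frob W ^ 2 = (k : ℝ) := by rw [frob_sq_trace, hW, trace_one_k]
  have hfrobWt : frob Wt ^ 2 = (k : ℝ) := by rw [frob_sq_trace, hWt, trace_one_k]
  have hterm1 : (Δ * Δ * P).trace = frob (Δ * W) ^ 2 := by
    rw [frob_sq_trace, Matrix.transpose_mul, hsym]
    have e1 : Δ * Δ * P = Δ * Δ * W * Wᵀ := by rw [hP, ← Matrix.mul_assoc]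
    rw [e1, Matrix.trace_mul_cycle]
    rw [← Matrix.mul_assoc, ← Matrix.mul_assoc]
  have hterm2 : (Δ * Δ * Q).trace = frob (Δ * Wt) ^ 2 := by
    rw [frob_sq_trace, Matrix.transpose_mul, hsym]
    have e1 : Δ * Δ * Q = Δ * Δ * Wt * Wtᵀ := by rw [hQ, ← Matrix.mul_assoc]
    rw [e1, Matrix.trace_mul_cycle]
    rw [← Matrix.mul_assoc, ← Matrix.mul_assoc]
  have hb1 : frob (Δ * W) ^2 ≤ specNorm Δ ^2 * k := by
    have h1 := frob_mul_le Δ W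
    have h2 : frob (Δ * W) ^2 ≤ (specNorm Δ * frob W)^2 := by
      nlinarith [frob_nonneg (Δ * W), mul_nonneg (specNorm_nonneg Δ) (frob_nonneg W)]
    rw [mul_pow, hfrobW] at h2
    exact h2
  have hb2 : frob (Δ * Wt) ^2 ≤ specNorm Δ ^2 * k := by
    have h1 := frob_mul_le Δ Wt
    have h2 : frob (Δ * Wt) ^2 ≤ (specNorm Δ * frob Wt)^2 := by
      nlinarith [frob_nonneg (Δ * Wt), mul_nonneg (specNorm_nonneg Δ) (frob_nonneg Wt)]
    rw [mul_pow, hfrobWt] at h2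
    exact h2
  have hfd : frob Δ ^ 2 = (Δ * Δ).trace := by
    rw [frob_sq_trace, hsym]
  rw [hfd, hsplit, hterm1, hterm2]
  linarith


theorem stmt13 {n k : ℕ} (W Wt : Matrix (Fin n) (Fin k) ℝ)
    (hW : Wᵀ * W = 1) (hWt : Wtᵀ * Wt = 1) :
    specNorm (W * Wᵀ - Wt * Wtᵀ) ≤
        sInf {r : ℝ | ∃ U : Matrix (Fin k) (Fin k) ℝ, Uᵀ * U = 1 ∧ r = frob (Wt * U - W)} ∧
      sInf {r : ℝ | ∃ U : Matrix (Fin k) (Fin k) ℝ, Uᵀ * U = 1 ∧ r = frob (Wt * U - W)} ≤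
        Real.sqrt (2 * k) * specNorm (W * Wᵀ - Wt * Wtᵀ) := by
  set M := Wᵀ * Wt with hM
  obtain ⟨U₀, hU₀, hmax⟩ := exists_maxU M
  have hpsd := maxU_psd M U₀ hU₀ hmax
  have hMspec : specNorm M ≤ 1 := by
    have h1 := spec_mul_le Wᵀ Wt
    have h2 := spec_transpose_le W
    have h3 := spec_orth_le_one hW
    have h4 := spec_orth_le_one hWt
    nlinarith [specNorm_nonneg Wᵀ, specNorm_nonneg Wt, specNorm_nonneg W]
  have htau := tau_ge_frobM M U₀ hU₀ hMspec hpsd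
  have hquad : 2 * (M * U₀).trace ≤ (k:ℝ) + (Mᵀ * M).trace := by
    have h1 : (0:ℝ) ≤ frob (1 - M * U₀) ^ 2 := sq_nonneg _
    rw [frob_sq_trace] at h1
    have h2 : ((1 - M*U₀)ᵀ * (1 - M*U₀)).trace
        = (k:ℝ) - 2*(M*U₀).trace + ((M*U₀)ᵀ*(M*U₀)).trace := by
      rw [Matrix.transpose_sub, Matrix.transpose_one, Matrix.sub_mul, Matrix.mul_sub,
        Matrix.mul_sub, Matrix.one_mul, Matrix.mul_one, Matrix.trace_sub, Matrix.trace_sub,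
        Matrix.trace_sub, Matrix.trace_transpose, trace_one_k]
      simp only [Matrix.one_mul]
      ring
    rw [h2, trace_NtN M U₀ hU₀] at h1
    linarith
  have hcore := core_one W Wt hW hWt
  have hds := frob_delta_sq W Wt hW hWt
  have hdle := frob_delta_le W Wt hW hWt
  have e1 : frob (W * Wᵀ - Wt * Wtᵀ) ^2 = 2*(k:ℝ) - 2*(Mᵀ * M).trace := by
    rw [hds, hM]
  constructor
  · refine le_csInf ⟨_, ⟨(1 : Matrix (Fin k) (Fin k) ℝ), by simp, rfl⟩⟩ ?_
    rintro r ⟨U, hU, rfl⟩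
    have hfd := frob_D_sq W Wt U hW hWt hU
    have hmaxU := hmax U hU
    have key : specNorm (W * Wᵀ - Wt * Wtᵀ) ^2 ≤ frob (Wt * U - W) ^2 := by
      rw [hfd]
      linarith
    nlinarith [specNorm_nonneg (W * Wᵀ - Wt * Wtᵀ), frob_nonneg (Wt * U - W)]
  · have hbdd : BddBelow {r : ℝ | ∃ U : Matrix (Fin k) (Fin k) ℝ,
        Uᵀ * U = 1 ∧ r = frob (Wt * U - W)} := by
      refine ⟨0, ?_⟩
      rintro r ⟨U, hU, rfl⟩
      exact frob_nonneg _
    refine le_trans (csInf_le hbdd ⟨U₀, hU₀, rfl⟩) ?_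
    have hfd := frob_D_sq W Wt U₀ hW hWt hU₀
    have key : frob (Wt * U₀ - W) ^2 ≤ 2*(k:ℝ) * specNorm (W * Wᵀ - Wt * Wtᵀ) ^2 := by
      rw [hfd]
      linarith
    have hs2 : Real.sqrt (2*(k:ℝ)) ^ 2 = 2*(k:ℝ) := Real.sq_sqrt (by positivity)
    nlinarith [frob_nonneg (Wt * U₀ - W), Real.sqrt_nonneg (2*(k:ℝ)),
      specNorm_nonneg (W * Wᵀ - Wt * Wtᵀ),
      mul_nonneg (Real.sqrt_nonneg (2*(k:ℝ))) (specNorm_nonneg (W * Wᵀ - Wt * Wtᵀ))]
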